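/- Let $k \neq 0$, $\kappa$ be real, $w = -k(k^2-3\kappa^2)$, $\omega = -\kappa(3k^2-\kappa^2)$, $\phi \in \mathbb{R}$. Then the complex-valued function $u(t,x) = e^{i\phi} e^{i(\kappa x + \omega t)} \cdot \frac{|k|}{2\cosh(kx+wt)}$ satisfies the Hirota equation $u_t + 24|u|^2 u_x + u_{xxx} = 0$. -/

import Mathlib

open Complex

lemma inner_lin (a b : ℂ) (y : ℝ) : HasDerivAt (fun y : ℝ => a + b * (y:ℂ)) b y := by
  simpa using ((Complex.ofRealCLM.hasDerivAt (x := y)).const_mul b).const_add a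

lemma hcosh (r s : ℂ) (y : ℝ) :
    HasDerivAt (fun y : ℝ => Complex.cosh (r * y + s)) (Complex.sinh (r * y + s) * r) y := by
  have h2 : HasDerivAt (fun y : ℝ => r * (y:ℂ) + s) r y := by
    simpa [add_comm] using inner_lin s r y
  exact (Complex.hasDerivAt_cosh (r * (y:ℂ) + s)).comp y h2

lemma hsinh (r s : ℂ) (y : ℝ) :
    HasDerivAt (fun y : ℝ => Complex.sinh (r * y + s)) (Complex.cosh (r * y + s) * r) y := by
  have h2 : HasDerivAt (fun y : ℝ => r * (y:ℂ) + s) r y := by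
    simpa [add_comm] using inner_lin s r y
  exact (Complex.hasDerivAt_sinh (r * (y:ℂ) + s)).comp y h2

lemma gderiv (p q r s c : ℂ) (hr : ∀ y : ℝ, Complex.cosh (r * y + s) ≠ 0) (y : ℝ) :
    HasDerivAt (fun y : ℝ => Complex.exp (p + q * y) * (c / (2 * Complex.cosh (r * y + s))))
      (Complex.exp (p + q * y) * (c / (2 * Complex.cosh (r * y + s))) *
        (q - r * (Complex.sinh (r * y + s) / Complex.cosh (r * y + s)))) y := by
  have hE := (inner_lin p q y).cexp
  have hD := (hasDerivAt_const y c).div ((hcosh r s y).const_mul 2) (by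
    simpa using mul_ne_zero two_ne_zero (hr y))
  have := hE.mul hD
  simp only [Pi.mul_def, Pi.div_def, Pi.sub_def] at this
  convert this using 1
  · rfl
  have h0 := hr y
  field_simp
  ring_nf
  field_simp

lemma htanh (r s : ℂ) (hr : ∀ y : ℝ, Complex.cosh (r * y + s) ≠ 0) (y : ℝ) :
    HasDerivAt (fun y : ℝ => Complex.sinh (r * y + s) / Complex.cosh (r * y + s))
      (r * (1 - (Complex.sinh (r * y + s) / Complex.cosh (r * y + s))^2)) y := by
  have := (hsinh r s y).div (hcosh r s y) (hr y)
  simp only [Pi.mul_def, Pi.div_def, Pi.sub_def] at this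
  convert this using 1
  · rfl
  have h0 := hr y
  have hid := Complex.cosh_sq_sub_sinh_sq (r * y + s)
  field_simp

lemma gderiv2 (p q r s c : ℂ) (hr : ∀ y : ℝ, Complex.cosh (r * y + s) ≠ 0) (y : ℝ) :
    HasDerivAt (fun y : ℝ => Complex.exp (p + q * y) * (c / (2 * Complex.cosh (r * y + s))) *
        (q - r * (Complex.sinh (r * y + s) / Complex.cosh (r * y + s))))
      (Complex.exp (p + q * y) * (c / (2 * Complex.cosh (r * y + s))) *
        ((q - r * (Complex.sinh (r * y + s) / Complex.cosh (r * y + s)))^2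
          - r^2 * (1 - (Complex.sinh (r * y + s) / Complex.cosh (r * y + s))^2))) y := by
  have hB := (hasDerivAt_const y q).sub ((htanh r s hr y).const_mul r)
  have := (gderiv p q r s c hr y).mul hB
  simp only [Pi.mul_def, Pi.div_def, Pi.sub_def] at this
  convert this using 1
  · rfl
  ring

lemma gderiv3 (p q r s c : ℂ) (hr : ∀ y : ℝ, Complex.cosh (r * y + s) ≠ 0) (y : ℝ) :
    HasDerivAt (fun y : ℝ => Complex.exp (p + q * y) * (c / (2 * Complex.cosh (r * y + s))) *
        ((q - r * (Complex.sinh (r * y + s) / Complex.cosh (r * y + s)))^2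
          - r^2 * (1 - (Complex.sinh (r * y + s) / Complex.cosh (r * y + s))^2)))
      (Complex.exp (p + q * y) * (c / (2 * Complex.cosh (r * y + s))) *
        ((q - r * (Complex.sinh (r * y + s) / Complex.cosh (r * y + s)))^3
          - 3 * r^2 * (1 - (Complex.sinh (r * y + s) / Complex.cosh (r * y + s))^2)
              * (q - r * (Complex.sinh (r * y + s) / Complex.cosh (r * y + s)))
          + 2 * r^3 * (Complex.sinh (r * y + s) / Complex.cosh (r * y + s))
              * (1 - (Complex.sinh (r * y + s) / Complex.cosh (r * y + s))^2))) y := by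
  have hT := htanh r s hr y
  have hB := (hasDerivAt_const y q).sub (hT.const_mul r)
  have hpoly := (hB.mul hB).sub (((hasDerivAt_const y (1:ℂ)).sub (hT.mul hT)).const_mul (r^2))
  have h2 := (gderiv p q r s c hr y).mul hpoly
  simp only [Pi.mul_def, Pi.div_def, Pi.sub_def] at h2
  have hfun : (fun y : ℝ => Complex.exp (p + q * y) * (c / (2 * Complex.cosh (r * y + s))) *
        ((q - r * (Complex.sinh (r * y + s) / Complex.cosh (r * y + s))) *
           (q - r * (Complex.sinh (r * y + s) / Complex.cosh (r * y + s)))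
          - r^2 * (1 - (Complex.sinh (r * y + s) / Complex.cosh (r * y + s)) *
              (Complex.sinh (r * y + s) / Complex.cosh (r * y + s)))))
      = (fun y : ℝ => Complex.exp (p + q * y) * (c / (2 * Complex.cosh (r * y + s))) *
        ((q - r * (Complex.sinh (r * y + s) / Complex.cosh (r * y + s)))^2
          - r^2 * (1 - (Complex.sinh (r * y + s) / Complex.cosh (r * y + s))^2))) := by
    funext z; ring
  rw [hfun] at h2
  convert h2 using 1
  · rfl
  ring

lemma g_iter3 (p q r s c : ℂ) (hr : ∀ y : ℝ, Complex.cosh (r * y + s) ≠ 0) (y : ℝ) :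
    iteratedDeriv 3 (fun y : ℝ => Complex.exp (p + q * y) * (c / (2 * Complex.cosh (r * y + s)))) y
      = Complex.exp (p + q * y) * (c / (2 * Complex.cosh (r * y + s))) *
        ((q - r * (Complex.sinh (r * y + s) / Complex.cosh (r * y + s)))^3
          - 3 * r^2 * (1 - (Complex.sinh (r * y + s) / Complex.cosh (r * y + s))^2)
              * (q - r * (Complex.sinh (r * y + s) / Complex.cosh (r * y + s)))
          + 2 * r^3 * (Complex.sinh (r * y + s) / Complex.cosh (r * y + s))
              * (1 - (Complex.sinh (r * y + s) / Complex.cosh (r * y + s))^2)) := by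
  have e1 : deriv (fun y : ℝ => Complex.exp (p + q * y) * (c / (2 * Complex.cosh (r * y + s))))
      = fun y : ℝ => Complex.exp (p + q * y) * (c / (2 * Complex.cosh (r * y + s))) *
        (q - r * (Complex.sinh (r * y + s) / Complex.cosh (r * y + s))) :=
    funext fun y => (gderiv p q r s c hr y).deriv
  have e2 : deriv (fun y : ℝ => Complex.exp (p + q * y) * (c / (2 * Complex.cosh (r * y + s))) *
        (q - r * (Complex.sinh (r * y + s) / Complex.cosh (r * y + s))))
      = fun y : ℝ => Complex.exp (p + q * y) * (c / (2 * Complex.cosh (r * y + s))) *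
        ((q - r * (Complex.sinh (r * y + s) / Complex.cosh (r * y + s)))^2
          - r^2 * (1 - (Complex.sinh (r * y + s) / Complex.cosh (r * y + s))^2)) :=
    funext fun y => (gderiv2 p q r s c hr y).deriv
  rw [iteratedDeriv_succ,
    iteratedDeriv_succ, iteratedDeriv_one, e1, e2]
  exact (gderiv3 p q r s c hr y).deriv

open Complex in
theorem hirota_modulated_soliton_solves_hirota
    (k κ w ω φ : ℝ) (hk : k ≠ 0)
    (hw : w = -k * (k^2 - 3*κ^2))
    (hω : ω = -κ * (3*k^2 - κ^2))
    (u : ℝ → ℝ → ℂ)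
    (hu : ∀ t x, u t x = Complex.exp (I * φ) * Complex.exp (I * (κ*x + ω*t)) *
        ((|k| : ℝ) / (2 * Real.cosh (k*x + w*t)))) :
    ∀ t x : ℝ,
      deriv (fun t' => u t' x) t
        + 24 * ((‖u t x‖)^2 : ℝ) * deriv (fun x' => u t x') x
        + iteratedDeriv 3 (fun x' => u t x') x = 0 := by
  intro t x
  have hrx : ∀ y : ℝ, Complex.cosh ((k:ℂ) * y + ((w*t : ℝ):ℂ)) ≠ 0 := by
    intro y
    have h1 : ((k:ℂ) * y + ((w*t : ℝ):ℂ)) = ((k*y + w*t : ℝ):ℂ) := by push_cast; ring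
    rw [h1, ← Complex.ofReal_cosh]
    exact_mod_cast (Real.cosh_pos _).ne'
  have hrt : ∀ y : ℝ, Complex.cosh ((w:ℂ) * y + ((k*x : ℝ):ℂ)) ≠ 0 := by
    intro y
    have h1 : ((w:ℂ) * y + ((k*x : ℝ):ℂ)) = ((w*y + k*x : ℝ):ℂ) := by push_cast; ring
    rw [h1, ← Complex.ofReal_cosh]
    exact_mod_cast (Real.cosh_pos _).ne'
  have hux : (fun x' => u t x') = fun y : ℝ =>
      Complex.exp ((I*φ + I*((ω*t : ℝ):ℂ)) + (I*κ) * y) *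
        (((|k| : ℝ):ℂ) / (2 * Complex.cosh ((k:ℂ) * y + ((w*t : ℝ):ℂ)))) := by
    funext y
    rw [hu, ← Complex.exp_add]
    congr 1
    · congr 1
      push_cast
      ring
    · push_cast
      ring_nf
  have hut : (fun t' => u t' x) = fun y : ℝ =>
      Complex.exp ((I*φ + I*((κ*x : ℝ):ℂ)) + (I*ω) * y) *
        (((|k| : ℝ):ℂ) / (2 * Complex.cosh ((w:ℂ) * y + ((k*x : ℝ):ℂ)))) := by
    funext y
    rw [hu, ← Complex.exp_add]
    congr 1
    · congr 1
      push_cast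
      ring
    · push_cast
      ring_nf
  have hdx := (gderiv (I*φ + I*((ω*t : ℝ):ℂ)) (I*κ) (k:ℂ) ((w*t : ℝ):ℂ) ((|k| : ℝ):ℂ) hrx x).deriv
  have hdt := (gderiv (I*φ + I*((κ*x : ℝ):ℂ)) (I*ω) (w:ℂ) ((k*x : ℝ):ℂ) ((|k| : ℝ):ℂ) hrt t).deriv
  have hd3 := g_iter3 (I*φ + I*((ω*t : ℝ):ℂ)) (I*κ) (k:ℂ) ((w*t : ℝ):ℂ) ((|k| : ℝ):ℂ) hrx x
  rw [hux, hut, hdx, hdt, hd3]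
  -- normalize the cosh/sinh arguments and the exponentials
  have harg1 : (k:ℂ) * x + ((w*t : ℝ):ℂ) = (k:ℂ)*x + (w:ℂ)*t := by push_cast; ring
  have harg2 : (w:ℂ) * t + ((k*x : ℝ):ℂ) = (k:ℂ)*x + (w:ℂ)*t := by push_cast; ring
  rw [harg1, harg2]
  set C : ℂ := Complex.cosh ((k:ℂ)*x + (w:ℂ)*t) with hC
  set S : ℂ := Complex.sinh ((k:ℂ)*x + (w:ℂ)*t) with hS
  have hGt : Complex.exp (I*φ + I*((κ*x : ℝ):ℂ) + (I*ω) * t)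
      = Complex.exp (I*φ + I*((ω*t : ℝ):ℂ) + (I*κ) * x) := by
    apply congrArg
    push_cast
    ring
  rw [hGt]
  set G : ℂ := Complex.exp (I*φ + I*((ω*t : ℝ):ℂ) + (I*κ) * x) with hGdef
  -- nonvanishing and hyperbolic identity
  have hC0 : C ≠ 0 := by rw [hC, ← harg1]; exact hrx x
  have hid : C^2 - S^2 = 1 := Complex.cosh_sq_sub_sinh_sq _
  -- the modulus squared
  have habs : ‖u t x‖ = |k| / (2 * Real.cosh (k*x + w*t)) := by
    rw [hu]
    rw [norm_mul, norm_mul, Complex.norm_exp, Complex.norm_exp]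
    have h1 : (I * (φ:ℂ)).re = 0 := by simp
    have h2 : (I * ((κ:ℂ)*(x:ℂ) + (ω:ℂ)*(t:ℂ))).re = 0 := by simp
    rw [h1, h2, Real.exp_zero]
    rw [norm_div, norm_mul, Complex.norm_real, Complex.norm_real, Complex.norm_two, Real.norm_eq_abs, Real.norm_eq_abs]
    rw [_root_.abs_of_nonneg (Real.cosh_pos _).le, _root_.abs_abs]
    ring
  rw [habs]
  have hcoshC : ((Real.cosh (k*x + w*t) : ℝ):ℂ) = C := by
    rw [hC, Complex.ofReal_cosh]; push_cast; ring_nf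
  have habs2 : (24:ℂ) * (((|k| / (2 * Real.cosh (k*x + w*t)))^2 : ℝ):ℂ)
      = 6 * (k:ℂ)^2 * (1 - (S/C)^2) := by
    have hkabs : ((|k| : ℝ):ℂ)^2 = (k:ℂ)^2 := by
      norm_cast
      exact _root_.sq_abs k
    push_cast
    rw [← hC]
    field_simp
    linear_combination 24 * hkabs - 24 * (k:ℂ)^2 * hid
  have key : ∀ T : ℂ,
      (I*(ω:ℂ) - (w:ℂ)*T)
      + 6*(k:ℂ)^2*(1 - T^2)*(I*(κ:ℂ) - (k:ℂ)*T)
      + ((I*(κ:ℂ) - (k:ℂ)*T)^3 - 3*(k:ℂ)^2*(1 - T^2)*(I*(κ:ℂ) - (k:ℂ)*T)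
          + 2*(k:ℂ)^3*T*(1 - T^2)) = 0 := by
    intro T
    subst hw hω
    push_cast
    linear_combination ((-3)*(κ:ℂ)^2*(k:ℂ)*T + (κ:ℂ)^3*I) * Complex.I_sq
  linear_combination (G * (((|k| : ℝ):ℂ)/(2*C))) * key (S/C)
    + (G * (((|k| : ℝ):ℂ)/(2*C)) * (I*(κ:ℂ) - (k:ℂ)*(S/C))) * habs2
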